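/- Let a and b be rational integers with a² − 2b² = 1, and let y = a + b·i + b·j ∈ Quaternion ℤ. Set x = y²·(−i)·y²·i. Then x = 1 + 4ab·i − 8a²b²·k; moreover x + conj(x) = 2 (i.e. Tr(x) = 2) and normSq(x) = (normSq(y))⁴. -/

import Mathlib

/-- For a Pell solution `a² - 2b² = 1` and `y = a + b i + b j`, the element
`x = y²·(−i)·y²·i` equals `1 + 4ab·i − 8a²b²·k`, has trace 2, and has norm `N(y)⁴`. -/
theorem quaternion_pell_construction (a b : ℤ) (hpell : a ^ 2 - 2 * b ^ 2 = 1)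
    (i y x : Quaternion ℤ) (hi : i = ⟨0, 1, 0, 0⟩) (hy : y = ⟨a, b, b, 0⟩)
    (hx : x = y ^ 2 * (-i) * y ^ 2 * i) :
    x = ⟨1, 4 * a * b, 0, -(8 * a ^ 2 * b ^ 2)⟩ ∧
    x + star x = 2 ∧
    Quaternion.normSq x = (Quaternion.normSq y) ^ 4 := by
  have h2 : (2 : Quaternion ℤ) = ⟨2, 0, 0, 0⟩ := by
    have : (2 : Quaternion ℤ) = 1 + 1 := by norm_num
    rw [this]; ext <;> open Quaternion in simp
  have hny : Quaternion.normSq y = a ^ 2 + 2 * b ^ 2 := by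
    subst hy; erw [Quaternion.normSq_def']; ring
  have h1 : x = ⟨1, 4 * a * b, 0, -(8 * a ^ 2 * b ^ 2)⟩ := by
    subst hx
    ext
    · simp [pow_two]; simp [hi, hy]; linear_combination (a ^ 2 - 2 * b ^ 2 + 1) * hpell
    · simp [pow_two]; simp [hi, hy]; linear_combination (4 * a * b) * hpell
    · simp [pow_two]; simp [hi, hy]; ring
    · simp [pow_two]; simp [hi, hy]; ring
  refine ⟨h1, ?_, ?_⟩
  · rw [h2]; ext <;> simp <;> simp [h1]
  · rw [hny, Quaternion.normSq_def', h1]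
    simp
    linear_combination ((a ^ 2 - 2 * b ^ 2 + 1) *
      ((a ^ 2 - 2 * b ^ 2) ^ 2 - 1 - 2 * (a ^ 2 + 2 * b ^ 2) ^ 2)) * hpell
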